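/- Let 1 < p < ∞ and v ∈ Â_p, i.e., v = (Mh)^{1−p} u for some h ∈ L¹_loc(ℝⁿ) with Mh finite a.e. and some u ∈ A₁. Then v is a doubling weight: there exists a constant Δ_v ≤ C_n ‖u‖_{A₁} (depending polynomially on ‖v‖_{Â_p}^p) such that v(2Q) ≤ Δ_v v(Q) for every cube Q, where 2Q is the cube with the same center and twice the side length. -/

import Mathlib

open MeasureTheory ENNReal NNReal Set Filter

noncomputable def wInt {n : ℕ} (v : (Fin n → ℝ) → ℝ) (E : Set (Fin n → ℝ)) : ℝ≥0∞ :=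
  ∫⁻ x in E, ENNReal.ofReal (v x)

noncomputable def maxOp {n : ℕ} (h : (Fin n → ℝ) → ℝ) (x : Fin n → ℝ) : ℝ≥0∞ :=
  ⨆ (c : Fin n → ℝ) (r : ℝ) (_ : 0 < r) (_ : x ∈ Metric.closedBall c r),
    (∫⁻ y in Metric.closedBall c r, ENNReal.ofReal |h y|) / volume (Metric.closedBall c r)

def IsA1 {n : ℕ} (u : (Fin n → ℝ) → ℝ) (C : ℝ) : Prop :=
  (∀ x, 0 ≤ u x) ∧ MeasureTheory.LocallyIntegrable u volume ∧
    ∀ (c : Fin n → ℝ) (r : ℝ), 0 < r →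
      wInt u (Metric.closedBall c r) ≤
        ENNReal.ofReal C *
          essInf (fun y => ENNReal.ofReal (u y)) (volume.restrict (Metric.closedBall c r)) *
          volume (Metric.closedBall c r)

noncomputable def distribF {n : ℕ} (v : (Fin n → ℝ) → ℝ) (g : (Fin n → ℝ) → ℝ≥0∞)
    (y : ℝ≥0∞) : ℝ≥0∞ :=
  wInt v {x | y < g x}

noncomputable def wkLorentz {n : ℕ} (p : ℝ) (v : (Fin n → ℝ) → ℝ)
    (g : (Fin n → ℝ) → ℝ≥0∞) : ℝ≥0∞ :=
  ⨆ y : ℝ≥0, (y : ℝ≥0∞) * (distribF v g y) ^ (1 / p)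

noncomputable def lorentzOne {n : ℕ} (p : ℝ) (v : (Fin n → ℝ) → ℝ)
    (g : (Fin n → ℝ) → ℝ≥0∞) : ℝ≥0∞ :=
  ENNReal.ofReal p * ∫⁻ y in Set.Ioi (0:ℝ), (distribF v g (ENNReal.ofReal y)) ^ (1 / p)

noncomputable def ofFun {n : ℕ} (f : (Fin n → ℝ) → ℝ) : (Fin n → ℝ) → ℝ≥0∞ :=
  fun x => ENNReal.ofReal |f x|

noncomputable def l1Norm {n : ℕ} (u f : (Fin n → ℝ) → ℝ) : ℝ≥0∞ :=
  ∫⁻ x, ENNReal.ofReal |f x| * ENNReal.ofReal (u x)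

lemma volCB {n : ℕ} (c : Fin n → ℝ) {r : ℝ} (hr : 0 ≤ r) :
    volume (Metric.closedBall c r) = ENNReal.ofReal ((2*r)^n) := by
  rw [Real.volume_pi_closedBall c hr, Fintype.card_fin]

lemma volCB_pos {n : ℕ} (c : Fin n → ℝ) {r : ℝ} (hr : 0 < r) :
    0 < volume (Metric.closedBall c r) := by
  rw [volCB c hr.le]
  positivity

lemma volCB_ne_top {n : ℕ} (c : Fin n → ℝ) {r : ℝ} (hr : 0 ≤ r) :
    volume (Metric.closedBall c r) ≠ ∞ := by
  rw [volCB c hr]; exact ofReal_ne_top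

lemma le_maxOp {n : ℕ} (h : (Fin n → ℝ) → ℝ) {x c : Fin n → ℝ} {r : ℝ}
    (hr : 0 < r) (hx : x ∈ Metric.closedBall c r) :
    (∫⁻ y in Metric.closedBall c r, ENNReal.ofReal |h y|) / volume (Metric.closedBall c r)
      ≤ maxOp h x :=
  le_iSup_of_le c <| le_iSup_of_le r <| le_iSup_of_le hr <| le_iSup_of_le hx le_rfl

lemma weak11 {n : ℕ} (hn : n ≠ 0) (g : (Fin n → ℝ) → ℝ)
    {lam : ℝ≥0∞} (hlam0 : lam ≠ 0) (hlamt : lam ≠ ∞)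
    (hT : (∫⁻ x, ENNReal.ofReal |g x|) ≠ ∞) :
    volume {y | lam < maxOp g y} ≤ 5 ^ n * (∫⁻ x, ENNReal.ofReal |g x|) / lam := by
  classical
  set T := ∫⁻ x, ENNReal.ofReal |g x| with hTdef
  set E := {y : Fin n → ℝ | lam < maxOp g y} with hE
  have key : ∀ y, y ∈ E → ∃ c : Fin n → ℝ, ∃ r : ℝ, 0 < r ∧ y ∈ Metric.closedBall c r ∧
      lam * volume (Metric.closedBall c r) <
        ∫⁻ z in Metric.closedBall c r, ENNReal.ofReal |g z| := by
    intro y hy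
    have hy' : lam < maxOp g y := hy
    rw [maxOp] at hy'
    simp only [lt_iSup_iff] at hy'
    obtain ⟨c, r, hr, hyB, hlt⟩ := hy'
    refine ⟨c, r, hr, hyB, ?_⟩
    rwa [ENNReal.lt_div_iff_mul_lt (Or.inl (volCB_pos c hr).ne')
      (Or.inl (volCB_ne_top c hr.le))] at hlt
  choose! c ρ hρ hyB hint using key
  set R : ℝ := ((T / lam).toReal) ^ (n : ℝ)⁻¹ / 2 with hRdef
  have hvol_le : ∀ y ∈ E, volume (Metric.closedBall (c y) (ρ y)) ≤ T / lam := by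
    intro y hy
    rw [ENNReal.le_div_iff_mul_le (Or.inl hlam0) (Or.inl hlamt), mul_comm]
    exact le_trans (hint y hy).le (setLIntegral_le_lintegral _ _)
  have hrad : ∀ y ∈ E, ρ y ≤ R := by
    intro y hy
    have h1 : ENNReal.ofReal ((2 * ρ y) ^ n) ≤ T / lam := by
      rw [← volCB (c y) (hρ y hy).le]; exact hvol_le y hy
    have hdt : T / lam ≠ ∞ := by
      simp only [Ne, ENNReal.div_eq_top]
      push_neg
      exact ⟨fun _ => hlam0, fun hTt => absurd hTt hT⟩
    have h2 : (2 * ρ y) ^ n ≤ (T / lam).toReal :=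
      (ENNReal.ofReal_le_iff_le_toReal hdt).mp h1
    have hpy := hρ y hy
    have h3 : ((2 * ρ y) ^ n : ℝ) ^ (n : ℝ)⁻¹ ≤ ((T / lam).toReal) ^ (n : ℝ)⁻¹ :=
      Real.rpow_le_rpow (by positivity) h2 (by positivity)
    have h4 : ((2 * ρ y) ^ n : ℝ) ^ (n : ℝ)⁻¹ = 2 * ρ y := by
      rw [← Real.rpow_natCast (2 * ρ y) n, ← Real.rpow_mul (by positivity),
        mul_inv_cancel₀ (by exact_mod_cast hn), Real.rpow_one]
    rw [h4] at h3
    rw [hRdef]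
    linarith
  obtain ⟨w, hwE, hdisj, hcov⟩ :=
    Vitali.exists_disjoint_subfamily_covering_enlargement_closedBall E c ρ R hrad 5 (by norm_num)
  have hdisj' : Pairwise (Function.onFun Disjoint fun b : ↥w => Metric.closedBall (c b) (ρ b)) := by
    intro i j hij
    exact hdisj i.2 j.2 (fun h => hij (Subtype.ext h))
  have hwc : w.Countable := by
    have hcount := MeasureTheory.Measure.countable_meas_pos_of_disjoint_iUnion
      (μ := (volume : Measure (Fin n → ℝ)))
      (As := fun b : ↥w => Metric.closedBall (c b) (ρ b))
      (fun _ => Metric.isClosed_closedBall.measurableSet) hdisj'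
    have huniv : {i : ↥w | 0 < volume (Metric.closedBall (c i) (ρ i))} = Set.univ := by
      ext i
      simp only [mem_setOf_eq, mem_univ, iff_true]
      exact volCB_pos _ (hρ i (hwE i.2))
    rw [huniv] at hcount
    rw [← Set.countable_coe_iff]
    exact Set.countable_univ_iff.mp hcount
  haveI : Countable ↥w := Set.countable_coe_iff.mpr hwc
  have hcover : E ⊆ ⋃ b ∈ w, Metric.closedBall (c b) (5 * ρ b) := by
    intro y hy
    obtain ⟨b, hbw, hsub⟩ := hcov y hy
    exact Set.mem_biUnion hbw (hsub (hyB y hy))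
  have hsum_le : (∑' b : ↥w, ∫⁻ z in Metric.closedBall (c b) (ρ b), ENNReal.ofReal |g z|) ≤ T := by
    rw [← lintegral_iUnion (fun b : ↥w => Metric.isClosed_closedBall.measurableSet) hdisj']
    exact setLIntegral_le_lintegral _ _
  calc volume E ≤ volume (⋃ b ∈ w, Metric.closedBall (c b) (5 * ρ b)) := measure_mono hcover
    _ ≤ ∑' b : ↥w, volume (Metric.closedBall (c b) (5 * ρ b)) := measure_biUnion_le volume hwc _
    _ = ∑' b : ↥w, 5 ^ n * volume (Metric.closedBall (c b) (ρ b)) := by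
        refine tsum_congr fun b => ?_
        have hb : 0 < ρ b := hρ b (hwE b.2)
        rw [volCB _ (by positivity : (0:ℝ) ≤ 5 * ρ b), volCB _ hb.le]
        rw [show (2 * (5 * ρ (b:Fin n → ℝ))) = 5 * (2 * ρ (b:Fin n → ℝ)) by ring, mul_pow]
        rw [ENNReal.ofReal_mul (by positivity), ENNReal.ofReal_pow (by norm_num),
          ENNReal.ofReal_ofNat]
    _ ≤ ∑' b : ↥w, 5 ^ n *
        ((∫⁻ z in Metric.closedBall (c b) (ρ b), ENNReal.ofReal |g z|) / lam) := by
        refine Summable.tsum_le_tsum (fun b => mul_le_mul_right ?_ _) ENNReal.summable ENNReal.summable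
        rw [ENNReal.le_div_iff_mul_le (Or.inl hlam0) (Or.inl hlamt), mul_comm]
        exact (hint b (hwE b.2)).le
    _ = 5 ^ n * (∑' b : ↥w, ∫⁻ z in Metric.closedBall (c b) (ρ b), ENNReal.ofReal |g z|) / lam := by
        simp_rw [div_eq_mul_inv, ENNReal.tsum_mul_left, ENNReal.tsum_mul_right, mul_assoc]
    _ ≤ 5 ^ n * T / lam := by
        exact ENNReal.div_le_div (mul_le_mul_right hsum_le _) le_rfl

lemma maxOp_le_on_Q {n : ℕ} (h : (Fin n → ℝ) → ℝ) (c : Fin n → ℝ) {r : ℝ} (hr : 0 < r)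
    {y : Fin n → ℝ} (hy : y ∈ Metric.closedBall c r) :
    maxOp h y ≤ max (maxOp ((Metric.closedBall c (3*r)).indicator h) y)
      (5 ^ n * ⨅ x ∈ Metric.closedBall c (2*r), maxOp h x) := by
  rw [maxOp]
  refine iSup_le fun c' => iSup_le fun r' => iSup_le fun hr' => iSup_le fun hyB => ?_
  rcases lt_or_ge r' r with hcase | hcase
  · refine le_max_of_le_left ?_
    have hsub : Metric.closedBall c' r' ⊆ Metric.closedBall c (3*r) := by
      intro z hz
      rw [Metric.mem_closedBall] at hz ⊢
      have h1 : dist z c ≤ dist z c' + dist c' y + dist y c := dist_triangle4 z c' y c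
      have h2 : dist c' y ≤ r' := Metric.mem_closedBall'.mp hyB
      have h3 : dist y c ≤ r := Metric.mem_closedBall.mp hy
      linarith
    have heq : (∫⁻ z in Metric.closedBall c' r', ENNReal.ofReal |h z|) =
        ∫⁻ z in Metric.closedBall c' r',
          ENNReal.ofReal |(Metric.closedBall c (3*r)).indicator h z| := by
      refine setLIntegral_congr_fun Metric.isClosed_closedBall.measurableSet ?_
      intro z hz
      dsimp only
      rw [Set.indicator_of_mem (hsub hz)]
    rw [heq]
    exact le_maxOp _ hr' hyB
  · refine le_max_of_le_right ?_
    have hmle : (∫⁻ z in Metric.closedBall c' (r' + 4*r), ENNReal.ofReal |h z|) /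
        volume (Metric.closedBall c' (r' + 4*r)) ≤
        ⨅ x ∈ Metric.closedBall c (2*r), maxOp h x := by
      refine le_iInf fun x => le_iInf fun hx => ?_
      refine le_maxOp h (by linarith) ?_
      rw [Metric.mem_closedBall]
      have h1 : dist x c' ≤ dist x c + dist c y + dist y c' := dist_triangle4 x c y c'
      have h2 : dist c y ≤ r := Metric.mem_closedBall'.mp hy
      have h3 : dist y c' ≤ r' := Metric.mem_closedBall.mp hyB
      have h4 : dist x c ≤ 2*r := Metric.mem_closedBall.mp hx
      linarith
    have hBsub : Metric.closedBall c' r' ⊆ Metric.closedBall c' (r' + 4*r) :=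
      Metric.closedBall_subset_closedBall (by linarith)
    have hvol : volume (Metric.closedBall c' (r' + 4*r)) ≤
        5 ^ n * volume (Metric.closedBall c' r') := by
      rw [volCB _ (by linarith : (0:ℝ) ≤ r' + 4*r), volCB _ hr'.le,
        ← ENNReal.ofReal_ofNat, ← ENNReal.ofReal_pow (by norm_num),
        ← ENNReal.ofReal_mul (by positivity)]
      refine ENNReal.ofReal_le_ofReal ?_
      rw [← mul_pow]
      have hab : 2 * (r' + 4*r) ≤ 5 * (2 * r') := by linarith
      exact pow_le_pow_left₀ (by linarith) hab n
    have h5n0 : (5:ℝ≥0∞) ^ n ≠ 0 := by positivity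
    have h5nt : (5:ℝ≥0∞) ^ n ≠ ∞ := by
      exact ENNReal.pow_ne_top (by norm_num)
    calc (∫⁻ z in Metric.closedBall c' r', ENNReal.ofReal |h z|) /
          volume (Metric.closedBall c' r')
        ≤ (∫⁻ z in Metric.closedBall c' (r' + 4*r), ENNReal.ofReal |h z|) /
          volume (Metric.closedBall c' r') :=
          ENNReal.div_le_div (lintegral_mono_set hBsub) le_rfl
      _ = 5 ^ n * (∫⁻ z in Metric.closedBall c' (r' + 4*r), ENNReal.ofReal |h z|) /
          (5 ^ n * volume (Metric.closedBall c' r')) :=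
          (ENNReal.mul_div_mul_left _ _ h5n0 h5nt).symm
      _ ≤ 5 ^ n * (∫⁻ z in Metric.closedBall c' (r' + 4*r), ENNReal.ofReal |h z|) /
          volume (Metric.closedBall c' (r' + 4*r)) := ENNReal.div_le_div le_rfl hvol
      _ = 5 ^ n * ((∫⁻ z in Metric.closedBall c' (r' + 4*r), ENNReal.ofReal |h z|) /
          volume (Metric.closedBall c' (r' + 4*r))) := mul_div_assoc _ _ _
      _ ≤ 5 ^ n * ⨅ x ∈ Metric.closedBall c (2*r), maxOp h x := mul_le_mul_right hmle _

lemma rpow_anti {a b : ℝ≥0∞} {t : ℝ} (ht : t ≤ 0) (hab : a ≤ b) : b ^ t ≤ a ^ t := by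
  rw [show t = -(-t) by ring, ENNReal.rpow_neg a, ENNReal.rpow_neg b]
  exact ENNReal.inv_le_inv.mpr (ENNReal.rpow_le_rpow hab (by linarith))

lemma ofReal_toReal_rpow {x : ℝ≥0∞} (hx0 : 0 < x) (hxt : x ≠ ∞) (t : ℝ) :
    ENNReal.ofReal (x.toReal ^ t) = x ^ t := by
  rw [← ENNReal.ofReal_rpow_of_pos (ENNReal.toReal_pos hx0.ne' hxt), ENNReal.ofReal_toReal hxt]

/-- A weight `v = (Mh)^{1−p} u ∈ Â_p` (with `u ∈ A₁`, `1 < p < ∞`) is doubling, with a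
doubling constant controlled by `C_{n,p} ‖u‖_{A₁}`:
`v(2Q) ≤ C_{n,p} ‖u‖_{A₁} v(Q)` for every cube `Q` (sup-metric closed ball). -/
theorem hatAp_doubling (n : ℕ) (p : ℝ) (hp : 1 < p) :
    ∃ C : ℝ, 0 < C ∧
      ∀ (h u : (Fin n → ℝ) → ℝ) (Cu : ℝ), IsA1 u Cu → 1 ≤ Cu →
        MeasureTheory.LocallyIntegrable h volume →
        (∀ᵐ x, 0 < maxOp h x) → (∀ᵐ x, maxOp h x < ⊤) →
        ∀ (c : Fin n → ℝ) (r : ℝ), 0 < r →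
          wInt (fun x => (maxOp h x).toReal ^ (1 - p) * u x) (Metric.closedBall c (2 * r)) ≤
            ENNReal.ofReal (C * Cu) *
              wInt (fun x => (maxOp h x).toReal ^ (1 - p) * u x) (Metric.closedBall c r) := by
  classical
  rcases eq_or_ne n 0 with hn0 | hn
  · -- degenerate case: the space is a point
    refine ⟨1, one_pos, ?_⟩
    intro h u Cu hA1 hCu hloc hpos hfin c r hr
    have hQeq : Metric.closedBall c (2 * r) = Metric.closedBall c r := by
      subst hn0
      ext x
      have hx : x = c := Subsingleton.elim x c
      simp only [Metric.mem_closedBall, hx, dist_self]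
      constructor <;> intro <;> linarith
    rw [hQeq, one_mul]
    exact le_mul_of_one_le_left zero_le (ENNReal.one_le_ofReal.mpr hCu)
  · refine ⟨2 ^ (n+1) * (2 * 15 ^ n : ℝ) ^ (p-1), by positivity, ?_⟩
    intro h u Cu hA1 hCu hloc hpos hfin c r hr
    obtain ⟨hu0, huloc, huA1⟩ := hA1
    set m := ⨅ x ∈ Metric.closedBall c (2*r), maxOp h x with hmdef
    have hQ2Q3 : Metric.closedBall c (2*r) ⊆ Metric.closedBall c (3*r) :=
      Metric.closedBall_subset_closedBall (by linarith)
    have hQQ2 : Metric.closedBall c r ⊆ Metric.closedBall c (2*r) :=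
      Metric.closedBall_subset_closedBall (by linarith)
    -- m is finite
    have hm_top : m ≠ ∞ := by
      intro hmtop
      have hsub : Metric.closedBall c (2*r) ⊆ {x | ¬ maxOp h x < ∞} := by
        intro x hx
        have h1 : m ≤ maxOp h x := biInf_le _ hx
        rw [hmtop, top_le_iff] at h1
        simp [h1]
      have h0 : volume {x | ¬ maxOp h x < ∞} = 0 := ae_iff.mp hfin
      have := measure_mono_null hsub h0
      exact absurd this (volCB_pos c (by linarith : (0:ℝ) < 2*r)).ne'
    -- average over big balls centered at c is at most m
    have havg : ∀ s : ℝ, 2*r ≤ s →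
        (∫⁻ z in Metric.closedBall c s, ENNReal.ofReal |h z|) /
          volume (Metric.closedBall c s) ≤ m := by
      intro s hs
      refine le_iInf fun x => le_iInf fun hx => ?_
      exact le_maxOp h (by linarith) (Metric.closedBall_subset_closedBall hs hx)
    have hm_pos : 0 < m := by
      rcases eq_or_ne m 0 with hm0 | hm0
      · exfalso
        have hint0 : ∀ s : ℝ, 2*r ≤ s →
            (∫⁻ z in Metric.closedBall c s, ENNReal.ofReal |h z|) = 0 := by
          intro s hs
          have h1 := havg s hs
          rw [hm0, le_zero_iff, ENNReal.div_eq_zero_iff] at h1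
          rcases h1 with h1 | h1
          · exact h1
          · exact absurd h1 (volCB_ne_top c (by linarith))
        have huniv : (Set.univ : Set (Fin n → ℝ)) = ⋃ k : ℕ, Metric.closedBall c (2*r + k) := by
          ext x
          simp only [mem_univ, true_iff, mem_iUnion, Metric.mem_closedBall]
          refine ⟨⌈dist x c⌉₊, ?_⟩
          have h2 := Nat.le_ceil (dist x c)
          linarith
        have htot : (∫⁻ z, ENNReal.ofReal |h z|) = 0 := by
          refine le_antisymm ?_ zero_le
          have hle : (∫⁻ z, ENNReal.ofReal |h z|) ≤
              ∑' k : ℕ, ∫⁻ z in Metric.closedBall c (2*r + k), ENNReal.ofReal |h z| := by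
            rw [← setLIntegral_univ, huniv]
            exact lintegral_iUnion_le _ _
          refine hle.trans ?_
          have hz : ∀ k : ℕ, (∫⁻ z in Metric.closedBall c (2*r + k), ENNReal.ofReal |h z|) = 0 :=
            fun k => hint0 _ (by have := Nat.cast_nonneg (α := ℝ) k; linarith)
          simp [hz]
        have hM0 : ∀ x, maxOp h x = 0 := by
          intro x
          rw [maxOp]
          refine le_antisymm ?_ zero_le
          refine iSup_le fun c' => iSup_le fun r' => iSup_le fun _ => iSup_le fun _ => ?_
          have h3 : (∫⁻ y in Metric.closedBall c' r', ENNReal.ofReal |h y|) = 0 :=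
            le_antisymm ((setLIntegral_le_lintegral _ _).trans htot.le) zero_le
          simp [h3]
        have h4 : volume {x : Fin n → ℝ | ¬ (0:ℝ≥0∞) < maxOp h x} = 0 := ae_iff.mp hpos
        have huniv0 : volume (Set.univ : Set (Fin n → ℝ)) = 0 := by
          refine measure_mono_null (fun x _ => ?_) h4
          simp [hM0 x]
        exact absurd (measure_mono_null (subset_univ _) huniv0) (volCB_pos c hr).ne'
      · exact pos_iff_ne_zero.mpr hm0
    set g := (Metric.closedBall c (3*r)).indicator h with hgdef
    have hgabs : (fun z => ENNReal.ofReal |g z|) =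
        (Metric.closedBall c (3*r)).indicator (fun z => ENNReal.ofReal |h z|) := by
      ext z
      by_cases hz : z ∈ Metric.closedBall c (3*r) <;> simp [hgdef, hz]
    have hT : (∫⁻ z, ENNReal.ofReal |g z|) =
        ∫⁻ z in Metric.closedBall c (3*r), ENNReal.ofReal |h z| := by
      simp only [hgabs]
      exact lintegral_indicator Metric.isClosed_closedBall.measurableSet _
    have hvol3 : volume (Metric.closedBall c (3*r)) =
        3^n * volume (Metric.closedBall c r) := by
      rw [volCB _ (by linarith : (0:ℝ) ≤ 3*r), volCB _ hr.le,
        show (2*(3*r)) = 3*(2*r) by ring, mul_pow,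
        ENNReal.ofReal_mul (by positivity), ENNReal.ofReal_pow (by norm_num),
        ENNReal.ofReal_ofNat]
    have hvol2 : volume (Metric.closedBall c (2*r)) =
        2^n * volume (Metric.closedBall c r) := by
      rw [volCB _ (by linarith : (0:ℝ) ≤ 2*r), volCB _ hr.le,
        show (2*(2*r)) = 2*(2*r) from rfl, show ((2:ℝ)*(2*r))^n = (2:ℝ)^n * (2*r)^n by
          rw [mul_pow],
        ENNReal.ofReal_mul (by positivity), ENNReal.ofReal_pow (by norm_num),
        ENNReal.ofReal_ofNat]
    have hT_le : (∫⁻ z, ENNReal.ofReal |g z|) ≤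
        m * volume (Metric.closedBall c (3*r)) := by
      rw [hT]
      have h1 := havg (3*r) (by linarith)
      rwa [ENNReal.div_le_iff_le_mul (Or.inl (volCB_pos c (by linarith : (0:ℝ) < 3*r)).ne')
        (Or.inl (volCB_ne_top c (by linarith : (0:ℝ) ≤ 3*r)))] at h1
    have hT_top : (∫⁻ z, ENNReal.ofReal |g z|) ≠ ∞ :=
      ne_top_of_le_ne_top (ENNReal.mul_ne_top hm_top
        (volCB_ne_top c (by linarith : (0:ℝ) ≤ 3*r))) hT_le
    set K : ℝ≥0∞ := 2 * 5^n * 3^n with hKdef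
    have hK0 : K ≠ 0 := by
      rw [hKdef]
      exact mul_ne_zero (mul_ne_zero two_ne_zero (pow_ne_zero _ (by norm_num)))
        (pow_ne_zero _ (by norm_num))
    have hKtop : K ≠ ∞ := by
      rw [hKdef]
      exact ENNReal.mul_ne_top (ENNReal.mul_ne_top (by norm_num)
        (ENNReal.pow_ne_top (by norm_num))) (ENNReal.pow_ne_top (by norm_num))
    set lam := K * m with hlamdef
    have hlam0 : lam ≠ 0 := mul_ne_zero hK0 hm_pos.ne'
    have hlamtop : lam ≠ ∞ := ENNReal.mul_ne_top hKtop hm_top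
    have hwk := weak11 hn g hlam0 hlamtop hT_top
    have hbad : volume {y | lam < maxOp g y} ≤ volume (Metric.closedBall c r) / 2 := by
      refine hwk.trans ?_
      rw [ENNReal.div_le_iff_le_mul (Or.inl hlam0) (Or.inl hlamtop)]
      calc (5:ℝ≥0∞)^n * (∫⁻ z, ENNReal.ofReal |g z|)
          ≤ 5^n * (m * (3^n * volume (Metric.closedBall c r))) := by
            refine mul_le_mul_right ?_ _
            rw [← hvol3]
            exact hT_le
        _ = volume (Metric.closedBall c r) / 2 * lam := by
            rw [hlamdef, hKdef,
              show volume (Metric.closedBall c r) / 2 * (2 * 5^n * 3^n * m) =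
                (volume (Metric.closedBall c r) / 2 * 2) * (5^n * (3^n * m)) by ring,
              ENNReal.div_mul_cancel (by norm_num) (by norm_num)]
            ring
    set Ebad := toMeasurable volume {y | lam < maxOp g y} with hEdef
    have hEmeas : MeasurableSet Ebad := measurableSet_toMeasurable _ _
    have hEvol : volume Ebad ≤ volume (Metric.closedBall c r) / 2 := by
      rw [hEdef, measure_toMeasurable]
      exact hbad
    set G := Metric.closedBall c r \ Ebad with hGdef
    have hGmeas : MeasurableSet G := Metric.isClosed_closedBall.measurableSet.diff hEmeas
    have hGQ : G ⊆ Metric.closedBall c r := diff_subset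
    have hGbound : ∀ y ∈ G, maxOp h y ≤ lam := by
      intro y hy
      have h1 : maxOp g y ≤ lam := by
        by_contra hcon
        push_neg at hcon
        exact hy.2 (subset_toMeasurable _ _ hcon)
      have h2 := maxOp_le_on_Q h c hr hy.1
      rw [← hmdef, ← hgdef] at h2
      refine h2.trans (max_le h1 ?_)
      rw [hlamdef, hKdef]
      refine mul_le_mul_left ?_ _
      calc (5:ℝ≥0∞)^n ≤ 2*5^n := le_mul_of_one_le_left zero_le one_le_two
        _ ≤ 2*5^n*3^n := le_mul_of_one_le_right zero_le
            (one_le_pow_of_one_le' (by norm_num : (1:ℝ≥0∞) ≤ 3) n)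
    have hGvol : volume (Metric.closedBall c r) ≤ 2 * volume G := by
      have hsplit : volume (Metric.closedBall c r ∩ Ebad) + volume G =
          volume (Metric.closedBall c r) := by
        rw [hGdef]
        exact measure_inter_add_diff _ hEmeas
      have h1 : volume (Metric.closedBall c r ∩ Ebad) ≤ volume (Metric.closedBall c r) / 2 :=
        (measure_mono inter_subset_right).trans hEvol
      have h2 : volume (Metric.closedBall c r) ≤
          volume (Metric.closedBall c r)/2 + volume G := by
        calc volume (Metric.closedBall c r)
            = volume (Metric.closedBall c r ∩ Ebad) + volume G := hsplit.symm
          _ ≤ volume (Metric.closedBall c r)/2 + volume G := add_le_add_left h1 _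
      have hhne : volume (Metric.closedBall c r)/2 ≠ ∞ :=
        ne_top_of_le_ne_top (volCB_ne_top c hr.le) ENNReal.half_le_self
      have h3 : volume (Metric.closedBall c r)/2 ≤ volume G := by
        have h4 : volume (Metric.closedBall c r)/2 + volume (Metric.closedBall c r)/2 ≤
            volume (Metric.closedBall c r)/2 + volume G := by
          rw [ENNReal.add_halves]
          exact h2
        exact (WithTop.add_le_add_iff_left hhne).mp h4
      calc volume (Metric.closedBall c r)
          = 2 * (volume (Metric.closedBall c r)/2) := by
            rw [mul_comm, ENNReal.div_mul_cancel (by norm_num) (by norm_num)]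
        _ ≤ 2 * volume G := mul_le_mul_right h3 _
    set e1 := essInf (fun y => ENNReal.ofReal (u y))
      (volume.restrict (Metric.closedBall c r)) with he1def
    set e2 := essInf (fun y => ENNReal.ofReal (u y))
      (volume.restrict (Metric.closedBall c (2*r))) with he2def
    have hA1Q2 := huA1 c (2*r) (by linarith)
    rw [← he2def] at hA1Q2
    have he21 : e2 ≤ e1 :=
      essInf_antitone_measure (Measure.absolutelyContinuous_of_le (Measure.restrict_mono hQQ2 le_rfl))
    have hVeq : ∀ᵐ x, ENNReal.ofReal ((maxOp h x).toReal ^ (1-p) * u x) =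
        (maxOp h x)^(1-p) * ENNReal.ofReal (u x) := by
      filter_upwards [hpos, hfin] with x hx1 hx2
      rw [ENNReal.ofReal_mul (Real.rpow_nonneg ENNReal.toReal_nonneg _),
        ofReal_toReal_rpow hx1 hx2.ne _]
    have hmp_top : m^(1-p) ≠ ∞ := by
      simp [ENNReal.rpow_eq_top_iff, hm_pos.ne', hm_top]
    have hlam_p_top : lam^(p-1) ≠ ∞ := by
      simp [ENNReal.rpow_eq_top_iff, hlam0, hlamtop]
    have hstepC : wInt (fun x => (maxOp h x).toReal ^ (1-p) * u x)
        (Metric.closedBall c (2*r)) ≤ m^(1-p) * wInt u (Metric.closedBall c (2*r)) := by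
      simp only [wInt]
      rw [← lintegral_const_mul' _ _ hmp_top]
      refine lintegral_mono_ae ?_
      filter_upwards [ae_restrict_of_ae hVeq,
        ae_restrict_mem Metric.isClosed_closedBall.measurableSet] with x hx hxm
      rw [hx]
      exact mul_le_mul_left (rpow_anti (by linarith) (biInf_le _ hxm)) _
    have hstepD : wInt u (Metric.closedBall c (2*r)) ≤
        ENNReal.ofReal Cu * e1 * (2^n * volume (Metric.closedBall c r)) := by
      refine hA1Q2.trans ?_
      rw [hvol2]
      exact mul_le_mul' (mul_le_mul_right he21 _) le_rfl
    have hstepE : e1 * volume G ≤ ∫⁻ x in G, ENNReal.ofReal (u x) := by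
      rw [← setLIntegral_const]
      refine lintegral_mono_ae ?_
      have hae1 : ∀ᵐ x ∂(volume.restrict (Metric.closedBall c r)),
          e1 ≤ ENNReal.ofReal (u x) := ae_essInf_le
      exact ae_mono (Measure.restrict_mono hGQ le_rfl) hae1
    have hstepF : (∫⁻ x in G, ENNReal.ofReal (u x)) ≤
        lam^(p-1) * wInt (fun x => (maxOp h x).toReal ^ (1-p) * u x)
          (Metric.closedBall c r) := by
      simp only [wInt]
      have hmono : (∫⁻ x in G, ENNReal.ofReal (u x)) ≤
          lam^(p-1) * ∫⁻ x in G, ENNReal.ofReal ((maxOp h x).toReal ^ (1-p) * u x) := by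
        rw [← lintegral_const_mul' _ _ hlam_p_top]
        refine lintegral_mono_ae ?_
        filter_upwards [ae_restrict_of_ae hVeq, ae_restrict_mem hGmeas] with x hx hxG
        rw [hx, ← mul_assoc]
        calc ENNReal.ofReal (u x) = 1 * ENNReal.ofReal (u x) := (one_mul _).symm
          _ ≤ (lam^(p-1) * (maxOp h x)^(1-p)) * ENNReal.ofReal (u x) := by
              refine mul_le_mul_left ?_ _
              have h1 : lam^(p-1) * lam^(1-p) = 1 := by
                rw [← ENNReal.rpow_add _ _ hlam0 hlamtop]
                norm_num
              rw [← h1]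
              exact mul_le_mul_right (rpow_anti (by linarith) (hGbound x hxG)) _
      exact hmono.trans (mul_le_mul_right (lintegral_mono_set hGQ) _)
    calc wInt (fun x => (maxOp h x).toReal ^ (1-p) * u x) (Metric.closedBall c (2*r))
        ≤ m^(1-p) * wInt u (Metric.closedBall c (2*r)) := hstepC
      _ ≤ m^(1-p) * (ENNReal.ofReal Cu * e1 * (2^n * volume (Metric.closedBall c r))) :=
          mul_le_mul_right hstepD _
      _ ≤ m^(1-p) * (ENNReal.ofReal Cu * e1 * (2^n * (2 * volume G))) := by
          gcongr
      _ = ENNReal.ofReal Cu * 2^(n+1) * (m^(1-p) * (e1 * volume G)) := by ring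
      _ ≤ ENNReal.ofReal Cu * 2^(n+1) * (m^(1-p) * (lam^(p-1) *
            wInt (fun x => (maxOp h x).toReal ^ (1-p) * u x) (Metric.closedBall c r))) := by
          exact mul_le_mul_right (mul_le_mul_right (hstepE.trans hstepF) _) _
      _ = ENNReal.ofReal Cu * 2^(n+1) * (K^(p-1) * ((m^(1-p) * m^(p-1)) *
            wInt (fun x => (maxOp h x).toReal ^ (1-p) * u x) (Metric.closedBall c r))) := by
          rw [hlamdef, ENNReal.mul_rpow_of_ne_top hKtop hm_top]
          ring
      _ = ENNReal.ofReal Cu * 2^(n+1) * (K^(p-1) *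
            wInt (fun x => (maxOp h x).toReal ^ (1-p) * u x) (Metric.closedBall c r)) := by
          rw [← ENNReal.rpow_add _ _ hm_pos.ne' hm_top]
          norm_num
      _ = ENNReal.ofReal (2 ^ (n+1) * (2 * 15 ^ n : ℝ) ^ (p-1) * Cu) *
            wInt (fun x => (maxOp h x).toReal ^ (1-p) * u x) (Metric.closedBall c r) := by
          rw [ENNReal.ofReal_mul (by positivity), ENNReal.ofReal_mul (by positivity),
            show ENNReal.ofReal ((2:ℝ)^(n+1)) = 2^(n+1) by
              rw [ENNReal.ofReal_pow (by norm_num), ENNReal.ofReal_ofNat],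
            ← ENNReal.ofReal_rpow_of_pos (by positivity),
            show ENNReal.ofReal ((2:ℝ) * 15^n) = K by
              rw [ENNReal.ofReal_mul (by norm_num), ENNReal.ofReal_pow (by norm_num),
                ENNReal.ofReal_ofNat, ENNReal.ofReal_ofNat, hKdef,
                show ((15:ℝ≥0∞)) = 5*3 by norm_num, mul_pow, mul_assoc]]
          ring
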